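/- For X ∼ Bernoulli(1/2) passed through the asymmetric erasure channel with P(Y=0|X=0)=2/3, P(Y=E|X=0)=1/3, P(Y=E|X=1)=1/2, P(Y=1|X=1)=1/2, one has s*(X;Y) = (1/2)·log₂(12/5), which is strictly greater than ρ_m(X;Y)² = 3/5. -/

import Mathlib

open scoped BigOperators

noncomputable section

/-- `p` is a probability mass function on a finite type. -/
def IsPMF {X : Type*} [Fintype X] (p : X → ℝ) : Prop :=
  (∀ x, 0 ≤ p x) ∧ ∑ x, p x = 1

/-- `p` is a joint probability mass function. -/
def IsJointPMF {X Y : Type*} [Fintype X] [Fintype Y] (p : X → Y → ℝ) : Prop :=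
  (∀ x y, 0 ≤ p x y) ∧ ∑ x, ∑ y, p x y = 1

/-- Hirschfeld–Gebelein–Rényi maximal correlation of a joint pmf `p`. -/
def maxCorr {X Y : Type*} [Fintype X] [Fintype Y] (p : X → Y → ℝ) : ℝ :=
  sSup {c : ℝ | ∃ f : X → ℝ, ∃ g : Y → ℝ,
    (∑ x, ∑ y, p x y * f x) = 0 ∧ (∑ x, ∑ y, p x y * g y) = 0 ∧
    (∑ x, ∑ y, p x y * (f x)^2) = 1 ∧ (∑ x, ∑ y, p x y * (g y)^2) = 1 ∧
    c = ∑ x, ∑ y, p x y * f x * g y}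

/-- Relative entropy (KL divergence) between pmfs on a finite type. -/
def KL {X : Type*} [Fintype X] (r p : X → ℝ) : ℝ :=
  ∑ x, r x * Real.log (r x / p x)

/-- `s*(X;Y)` for input distribution `p` and channel `W`. -/
def sStar {X Y : Type*} [Fintype X] [Fintype Y] (p : X → ℝ) (W : X → Y → ℝ) : ℝ :=
  sSup {c : ℝ | ∃ r : X → ℝ, IsPMF r ∧ r ≠ p ∧
    c = KL (fun y => ∑ x, r x * W x y) (fun y => ∑ x, p x * W x y) / KL r p}

/-- Shannon entropy of a pmf on a finite type. -/
def entropy {X : Type*} [Fintype X] (p : X → ℝ) : ℝ :=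
  ∑ x, Real.negMulLog (p x)

/-- Mutual information of a joint pmf. -/
def mutInfo {X Y : Type*} [Fintype X] [Fintype Y] (p : X → Y → ℝ) : ℝ :=
  entropy (fun x => ∑ y, p x y) + entropy (fun y => ∑ x, p x y)
    - entropy (fun z : X × Y => p z.1 z.2)

end

/-- `X ∼ Bernoulli(1/2)`. -/
noncomputable def pX : Fin 2 → ℝ := fun _ => 1/2

/-- The asymmetric erasure channel: `Y ∈ {0, E, 1}` encoded as `Fin 3` with `E = 1`. -/
noncomputable def Wch : Fin 2 → Fin 3 → ℝ := ![![2/3, 1/3, 0], ![0, 1/2, 1/2]]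

/-- Joint pmf of `(X,Y)`. -/
noncomputable def pXY : Fin 2 → Fin 3 → ℝ := fun x y => pX x * Wch x y

/-- `P(U = u | X = x)` (row `x`): `U|X=0 ∼ Ber(0.1)`, `U|X=1 ∼ Ber(0.4)`. -/
noncomputable def condU : Fin 2 → Fin 2 → ℝ := ![![9/10, 1/10], ![3/5, 2/5]]

/-- Joint pmf of `(U,X)` (so that `U - X - Y` is a Markov chain). -/
noncomputable def qUX : Fin 2 → Fin 2 → ℝ := fun u x => pX x * condU x u

/-- Joint pmf of `(U,Y)` induced through the channel. -/
noncomputable def qUY : Fin 2 → Fin 3 → ℝ := fun u y => ∑ x, qUX u x * Wch x y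

namespace SEC
open Real Set

noncomputable def C : ℝ := Real.log (12/5) / (2 * Real.log 2)

lemma log2_pos : 0 < Real.log 2 := Real.log_pos (by norm_num)

lemma C_gt : (3:ℝ)/5 < C := by
  have h : Real.log ((2:ℝ)^6) < Real.log ((12/5:ℝ)^5) :=
    Real.log_lt_log (by positivity) (by norm_num)
  rw [Real.log_pow, Real.log_pow] at h
  push_cast at h
  rw [C, lt_div_iff₀ (by positivity : (0:ℝ) < 2 * Real.log 2)]
  nlinarith [log2_pos]

lemma C_lt : C < 7/11 := by
  have h : Real.log ((12/5:ℝ)^11) < Real.log ((2:ℝ)^14) :=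
    Real.log_lt_log (by positivity) (by norm_num)
  rw [Real.log_pow, Real.log_pow] at h
  push_cast at h
  rw [C, div_lt_iff₀ (by positivity : (0:ℝ) < 2 * Real.log 2)]
  nlinarith [log2_pos]

noncomputable def F (a : ℝ) : ℝ :=
  -((2/3 - C)/2) * Real.negMulLog (2*a) - ((1/2 - C)/2) * Real.negMulLog (2-2*a)
  - (1/12) * Real.negMulLog (6-2*a) - ((6-2*a)/12) * Real.log 5

noncomputable def Fd (a : ℝ) : ℝ :=
  (2/3 - C) * Real.log (2*a) + (C - 1/2) * Real.log (2-2*a)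
  - (1/6) * Real.log (6-2*a) + (1/6) * Real.log 5

noncomputable def Fdd (a : ℝ) : ℝ := (2/3 - C)/a - (C - 1/2)/(1-a) + 1/(3*(6-2*a))

lemma F_cont : Continuous F := by
  unfold F
  fun_prop

lemma F_zero : F 0 = 0 := by
  have h125 : Real.log (12/5 : ℝ) = Real.log 2 + Real.log 6 - Real.log 5 := by
    rw [show (12/5:ℝ) = 2*6/5 by norm_num, Real.log_div (by norm_num) (by norm_num),
      Real.log_mul (by norm_num) (by norm_num)]
  have hC2 : C * (2 * Real.log 2) = Real.log (12/5) := by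
    rw [C]; field_simp
  norm_num [F, Real.negMulLog]
  linear_combination (-(1/2)) * hC2 + (-(1/2)) * h125

lemma F_half : F (1/2) = 0 := by
  norm_num [F, Real.negMulLog]
  ring

lemma Fd_half : Fd (1/2) = 0 := by
  norm_num [Fd]

lemma hasDerivAt_F {a : ℝ} (h1 : (2:ℝ)*a ≠ 0) (h2 : (2:ℝ)-2*a ≠ 0) (h3 : (6:ℝ)-2*a ≠ 0) :
    HasDerivAt F (Fd a) a := by
  have l1 : HasDerivAt (fun x : ℝ => 2*x) 2 a := by
    simpa using (hasDerivAt_id a).const_mul (2:ℝ)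
  have l2 : HasDerivAt (fun x : ℝ => 2-2*x) (-2) a := by
    simpa using ((hasDerivAt_id a).const_mul (2:ℝ)).const_sub 2
  have l3 : HasDerivAt (fun x : ℝ => 6-2*x) (-2) a := by
    simpa using ((hasDerivAt_id a).const_mul (2:ℝ)).const_sub 6
  have d1 : HasDerivAt (fun x : ℝ => Real.negMulLog (2*x)) ((-Real.log (2*a) - 1) * 2) a :=
    (Real.hasDerivAt_negMulLog h1).comp a l1
  have d2 : HasDerivAt (fun x : ℝ => Real.negMulLog (2-2*x)) ((-Real.log (2-2*a) - 1) * (-2)) a :=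
    by have := (Real.hasDerivAt_negMulLog h2).comp a l2; exact this
  have d3 : HasDerivAt (fun x : ℝ => Real.negMulLog (6-2*x)) ((-Real.log (6-2*a) - 1) * (-2)) a :=
    by have := (Real.hasDerivAt_negMulLog h3).comp a l3; exact this
  have d4 : HasDerivAt (fun x : ℝ => ((6-2*x)/12) * Real.log 5) ((-2/12) * Real.log 5) a := by
    simpa using (l3.div_const 12).mul_const (Real.log 5)
  have dtot := (((d1.const_mul (-((2/3 - C)/2))).sub (d2.const_mul ((1/2 - C)/2))).sub
      (d3.const_mul ((1/12 : ℝ)))).sub d4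
  convert dtot using 1
  · rfl
  · rfl
  · rfl
  simp only [Fd]
  ring

lemma hasDerivAt_Fd {a : ℝ} (ha : 0 < a) (ha1 : a < 1) : HasDerivAt Fd (Fdd a) a := by
  have h1 : (2:ℝ)*a ≠ 0 := by positivity
  have h2 : (2:ℝ)-2*a ≠ 0 := by nlinarith
  have h3 : (6:ℝ)-2*a ≠ 0 := by nlinarith
  have h4 : a ≠ 0 := ne_of_gt ha
  have h5 : (1:ℝ)-a ≠ 0 := by nlinarith
  have l1 : HasDerivAt (fun x : ℝ => 2*x) 2 a := by
    simpa using (hasDerivAt_id a).const_mul (2:ℝ)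
  have l2 : HasDerivAt (fun x : ℝ => 2-2*x) (-2) a := by
    simpa using ((hasDerivAt_id a).const_mul (2:ℝ)).const_sub 2
  have l3 : HasDerivAt (fun x : ℝ => 6-2*x) (-2) a := by
    simpa using ((hasDerivAt_id a).const_mul (2:ℝ)).const_sub 6
  have d1 : HasDerivAt (fun x : ℝ => Real.log (2*x)) ((2*a)⁻¹ * 2) a :=
    (Real.hasDerivAt_log h1).comp a l1
  have d2 : HasDerivAt (fun x : ℝ => Real.log (2-2*x)) ((2-2*a)⁻¹ * (-2)) a :=
    by have := (Real.hasDerivAt_log h2).comp a l2; exact this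
  have d3 : HasDerivAt (fun x : ℝ => Real.log (6-2*x)) ((6-2*a)⁻¹ * (-2)) a :=
    by have := (Real.hasDerivAt_log h3).comp a l3; exact this
  have dtot := (((d1.const_mul ((2:ℝ)/3 - C)).add (d2.const_mul (C - 1/2))).sub
      (d3.const_mul ((1/6 : ℝ)))).add_const ((1/6) * Real.log 5)
  convert dtot using 1
  · rfl
  · rfl
  · rfl
  simp only [Fdd]
  field_simp
  ring

lemma Fdd_strictAntiOn : StrictAntiOn Fdd (Ioo (0:ℝ) 1) := by
  intro a ha b hb hab
  obtain ⟨ha0, ha1⟩ := ha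
  obtain ⟨hb0, hb1⟩ := hb
  have hCg := C_gt
  have hCl := C_lt
  have n1 : a ≠ 0 := ne_of_gt ha0
  have n2 : b ≠ 0 := ne_of_gt hb0
  have n3 : (1:ℝ)-a ≠ 0 := by nlinarith
  have n4 : (1:ℝ)-b ≠ 0 := by nlinarith
  have n5 : (6:ℝ)-2*a ≠ 0 := by nlinarith
  have n6 : (6:ℝ)-2*b ≠ 0 := by nlinarith
  have e : Fdd a - Fdd b = (2/3 - C)*((b-a)/(a*b)) + (C - 1/2)*((b-a)/((1-a)*(1-b)))
      - (2/3)*((b-a)/((6-2*a)*(6-2*b))) := by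
    unfold Fdd
    field_simp
    ring
  have p1 : 0 < (2/3 - C)*((b-a)/(a*b)) := by
    apply mul_pos (by linarith)
    exact div_pos (by linarith) (by positivity)
  have hab1 : (0:ℝ) < (1-a)*(1-b) := by nlinarith
  have hab2 : (1-a)*(1-b) ≤ 1 := by nlinarith [mul_pos ha0 hb0]
  have p2 : (b-a) ≤ (b-a)/((1-a)*(1-b)) := by
    rw [le_div_iff₀ hab1]
    nlinarith [sub_pos.2 hab]
  have p2' : (1/24)*(b-a) < (C - 1/2)*((b-a)/((1-a)*(1-b))) := by
    have h1 : (1/24)*(b-a) < (C-1/2)*(b-a) := by nlinarith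
    have h2 : (C-1/2)*(b-a) ≤ (C - 1/2)*((b-a)/((1-a)*(1-b))) := by
      apply mul_le_mul_of_nonneg_left p2 (by linarith)
    linarith
  have p3 : (b-a)/((6-2*a)*(6-2*b)) ≤ (b-a)/16 := by
    apply div_le_div_of_nonneg_left (by linarith) (by norm_num)
    nlinarith
  have p3' : (2/3)*((b-a)/((6-2*a)*(6-2*b))) ≤ (1/24)*(b-a) := by nlinarith
  linarith [e, p1, p2', p3']

lemma Fdd_quarter_pos : 0 < Fdd (1/4) := by
  have := C_lt
  norm_num [Fdd]
  linarith

lemma Fdd_half_neg : Fdd (1/2) < 0 := by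
  have := C_gt
  norm_num [Fdd]
  linarith

lemma exists_m : ∃ m, m ∈ Icc (1/4:ℝ) (1/2) ∧ Fdd m = 0 := by
  have hcont : ContinuousOn Fdd (Icc (1/4:ℝ) (1/2)) := by
    have c1 : ContinuousOn (fun x : ℝ => (2/3 - C)/x) (Icc (1/4:ℝ) (1/2)) :=
      continuousOn_const.div continuousOn_id (fun x hx => ne_of_gt (by linarith [hx.1]))
    have c2 : ContinuousOn (fun x : ℝ => (C - 1/2)/(1-x)) (Icc (1/4:ℝ) (1/2)) :=
      continuousOn_const.div (continuousOn_const.sub continuousOn_id)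
        (fun x hx => ne_of_gt (by linarith [hx.2]))
    have c3 : ContinuousOn (fun x : ℝ => 1/(3*(6-2*x))) (Icc (1/4:ℝ) (1/2)) :=
      continuousOn_const.div (by fun_prop) (fun x hx => ne_of_gt (by nlinarith [hx.2]))
    exact (c1.sub c2).add c3
  have key := intermediate_value_Icc' (by norm_num : (1/4:ℝ) ≤ 1/2) hcont
  have h0 : (0:ℝ) ∈ Icc (Fdd (1/2)) (Fdd (1/4)) :=
    ⟨le_of_lt Fdd_half_neg, le_of_lt Fdd_quarter_pos⟩
  obtain ⟨m, hm, hm0⟩ := key h0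
  exact ⟨m, hm, hm0⟩

lemma F_nonpos : ∀ a ∈ Icc (0:ℝ) 1, F a ≤ 0 := by
  obtain ⟨m, ⟨hm14, hm12⟩, hm0⟩ := exists_m
  have hm0' : (0:ℝ) < m := by linarith
  have hm1 : m < 1 := by linarith
  have hm12' : m < 1/2 := lt_of_le_of_ne hm12 (fun h => by
    rw [h] at hm0; linarith [Fdd_half_neg])
  have hsignpos : ∀ x, 0 < x → x < m → 0 < Fdd x := fun x hx hxm => by
    have := Fdd_strictAntiOn ⟨hx, by linarith⟩ ⟨hm0', hm1⟩ hxm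
    rw [hm0] at this; exact this
  have hsignneg : ∀ x, m < x → x < 1 → Fdd x < 0 := fun x hmx hx1 => by
    have := Fdd_strictAntiOn ⟨hm0', hm1⟩ ⟨by linarith, hx1⟩ hmx
    rw [hm0] at this; exact this
  have hFdcont : ContinuousOn Fd (Ico m 1) := by
    have c1 : ContinuousOn (fun x : ℝ => Real.log (2*x)) (Ico m 1) :=
      ContinuousOn.log (by fun_prop) (fun x hx => ne_of_gt (by nlinarith [hx.1]))
    have c2 : ContinuousOn (fun x : ℝ => Real.log (2-2*x)) (Ico m 1) :=
      ContinuousOn.log (by fun_prop) (fun x hx => ne_of_gt (by nlinarith [hx.2]))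
    have c3 : ContinuousOn (fun x : ℝ => Real.log (6-2*x)) (Ico m 1) :=
      ContinuousOn.log (by fun_prop) (fun x hx => ne_of_gt (by nlinarith [hx.2]))
    exact (((c1.const_smul (2/3 - C)).add (c2.const_smul (C - 1/2))).sub
      (c3.const_smul (1/6:ℝ))).add continuousOn_const
  have hFdanti : StrictAntiOn Fd (Ico m 1) := by
    refine strictAntiOn_of_hasDerivWithinAt_neg (convex_Ico m 1) hFdcont (f' := Fdd) ?_ ?_
    · intro x hx
      rw [interior_Ico] at hx
      exact (hasDerivAt_Fd (by linarith [hx.1]) hx.2).hasDerivWithinAt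
    · intro x hx
      rw [interior_Ico] at hx
      exact hsignneg x hx.1 hx.2
  have hmono : MonotoneOn F (Icc m (1/2)) := by
    refine monotoneOn_of_hasDerivWithinAt_nonneg (convex_Icc _ _) F_cont.continuousOn
      (f' := Fd) ?_ ?_
    · intro x hx
      rw [interior_Icc] at hx
      have hx0 : (0:ℝ) < x := by linarith [hx.1]
      exact (hasDerivAt_F (ne_of_gt (by linarith)) (by nlinarith [hx.2]) (by nlinarith [hx.2])).hasDerivWithinAt
    · intro x hx
      rw [interior_Icc] at hx
      have := hFdanti ⟨le_of_lt hx.1, by linarith [hx.2]⟩ ⟨by linarith, by norm_num⟩ hx.2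
      rw [Fd_half] at this
      exact le_of_lt this
  have hanti : AntitoneOn F (Icc (1/2:ℝ) 1) := by
    refine antitoneOn_of_hasDerivWithinAt_nonpos (convex_Icc _ _) F_cont.continuousOn
      (f' := Fd) ?_ ?_
    · intro x hx
      rw [interior_Icc] at hx
      have hx0 : (0:ℝ) < x := by linarith [hx.1]
      exact (hasDerivAt_F (ne_of_gt (by linarith)) (by nlinarith [hx.2]) (by nlinarith [hx.2])).hasDerivWithinAt
    · intro x hx
      rw [interior_Icc] at hx
      have := hFdanti ⟨by linarith, by norm_num⟩ ⟨by linarith [hx.1], hx.2⟩ hx.1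
      rw [Fd_half] at this
      exact le_of_lt this
  have hFhalf_mem : (1/2:ℝ) ∈ Icc m (1/2) := ⟨hm12, le_refl _⟩
  have hFm : F m ≤ 0 := by
    have := hmono ⟨le_refl m, hm12⟩ hFhalf_mem hm12
    rw [F_half] at this; exact this
  have hmid : ∀ x ∈ Icc m (1/2), F x ≤ 0 := fun x hx => by
    have := hmono hx hFhalf_mem hx.2
    rw [F_half] at this; exact this
  have hright : ∀ x ∈ Icc (1/2:ℝ) 1, F x ≤ 0 := fun x hx => by
    have := hanti (⟨le_refl _, by norm_num⟩ : (1/2:ℝ) ∈ Icc (1/2:ℝ) 1) hx hx.1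
    rw [F_half] at this; exact this
  have hconv : ConvexOn ℝ (Icc (0:ℝ) m) F := by
    refine convexOn_of_hasDerivWithinAt2_nonneg (convex_Icc _ _) F_cont.continuousOn
      (f' := Fd) (f'' := Fdd) ?_ ?_ ?_
    · intro x hx
      rw [interior_Icc] at hx
      exact (hasDerivAt_F (ne_of_gt (by linarith [hx.1])) (by nlinarith [hx.2, hm12']) (by nlinarith [hx.2])).hasDerivWithinAt
    · intro x hx
      rw [interior_Icc] at hx
      exact (hasDerivAt_Fd hx.1 (by linarith [hx.2])).hasDerivWithinAt
    · intro x hx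
      rw [interior_Icc] at hx
      exact le_of_lt (hsignpos x hx.1 hx.2)
  have hleft : ∀ x ∈ Icc (0:ℝ) m, F x ≤ 0 := by
    intro x hx
    have ht0 : 0 ≤ x/m := div_nonneg hx.1 (le_of_lt hm0')
    have ht1 : x/m ≤ 1 := (div_le_one hm0').2 hx.2
    have hcomb := hconv.2 (⟨le_refl _, le_of_lt hm0'⟩ : (0:ℝ) ∈ Icc (0:ℝ) m)
      (⟨le_of_lt hm0', le_refl _⟩ : m ∈ Icc (0:ℝ) m) (by linarith : 0 ≤ 1 - x/m) ht0
      (by ring : (1 - x/m) + x/m = 1)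
    simp only [smul_eq_mul, mul_zero, F_zero] at hcomb
    have hxm : 0 + x/m * m = x := by field_simp; ring
    rw [hxm] at hcomb
    nlinarith [hcomb, hFm, ht0]
  intro a ha
  by_cases h1 : a ≤ m
  · exact hleft a ⟨ha.1, h1⟩
  · push_neg at h1
    by_cases h2 : a ≤ 1/2
    · exact hmid a ⟨le_of_lt h1, h2⟩
    · push_neg at h2
      exact hright a ⟨le_of_lt h2, ha.2⟩

lemma KLx_pos {a : ℝ} (ha0 : 0 ≤ a) (ha1 : a ≤ 1) (hne : a ≠ 1/2) :
    0 < a * Real.log (2*a) + (1-a) * Real.log (2-2*a) := by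
  rcases eq_or_lt_of_le ha0 with h0 | h0
  · rw [← h0]; norm_num; exact log2_pos
  rcases eq_or_lt_of_le ha1 with h1 | h1
  · rw [h1]; norm_num; exact log2_pos
  have h2a : (0:ℝ) < 2*a := by linarith
  have h2a' : (0:ℝ) < 2-2*a := by linarith
  have hmem1 : 1/(2*a) ∈ Ioi (0:ℝ) := by
    simp only [mem_Ioi]; positivity
  have hmem2 : 1/(2-2*a) ∈ Ioi (0:ℝ) := by
    simp only [mem_Ioi]; positivity
  have hne' : 1/(2*a) ≠ 1/(2-2*a) := by
    intro h
    apply hne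
    field_simp at h
    linarith
  have hcc := strictConcaveOn_log_Ioi.2 hmem1 hmem2 hne' h0 (by linarith : (0:ℝ) < 1 - a)
    (by ring : a + (1-a) = 1)
  have harg : a • (1/(2*a)) + (1-a) • (1/(2-2*a)) = 1 := by
    simp only [smul_eq_mul]
    field_simp
    ring
  rw [harg, Real.log_one] at hcc
  simp only [smul_eq_mul, one_div, Real.log_inv] at hcc
  linarith [hcc]

lemma KL_ratio_le {a : ℝ} (ha0 : 0 ≤ a) (ha1 : a ≤ 1) :
    (2*a/3) * Real.log ((2*a/3)/(1/3)) + ((3-a)/6) * Real.log (((3-a)/6)/(5/12))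
      + ((1-a)/2) * Real.log (((1-a)/2)/(1/4))
    ≤ C * (a * Real.log (2*a) + (1-a) * Real.log (2-2*a)) := by
  have hF := F_nonpos a ⟨ha0, ha1⟩
  have e1 : (2*a/3)/((1:ℝ)/3) = 2*a := by ring
  have e2 : ((3-a)/6)/((5:ℝ)/12) = (6-2*a)/5 := by ring
  have e3 : ((1-a)/2)/((1:ℝ)/4) = 2-2*a := by ring
  rw [e1, e2, e3]
  have e4 : Real.log ((6-2*a)/5) = Real.log (6-2*a) - Real.log 5 :=
    Real.log_div (by nlinarith) (by norm_num)
  rw [e4]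
  have key : (2*a/3) * Real.log (2*a) + ((3-a)/6) * (Real.log (6-2*a) - Real.log 5)
      + ((1-a)/2) * Real.log (2-2*a)
      - C * (a * Real.log (2*a) + (1-a) * Real.log (2-2*a)) = F a := by
    simp only [F, Real.negMulLog]
    ring
  linarith [hF, key]

end SEC



set_option maxHeartbeats 1000000 in
theorem sStar_erasure_channel :
    sStar pX Wch = (1/2) * (Real.log (12/5) / Real.log 2) ∧
    (maxCorr pXY)^2 = 3/5 ∧
    (3/5 : ℝ) < (1/2) * (Real.log (12/5) / Real.log 2) := by
  have hC_eq : (1/2) * (Real.log (12/5) / Real.log 2) = SEC.C := by rw [SEC.C]; ring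
  have hlog2 := SEC.log2_pos
  refine ⟨?_, ?_, ?_⟩
  · rw [hC_eq, sStar]
    apply IsGreatest.csSup_eq
    constructor
    · refine ⟨![0,1], ⟨fun x => by fin_cases x <;> norm_num,
        by norm_num [Fin.sum_univ_two]⟩, ?_, ?_⟩

      · intro h
        have := congrFun h 0
        norm_num [pX] at this
      · have hKLy : KL (fun y => ∑ x, (![0,1] : Fin 2 → ℝ) x * Wch x y)
            (fun y => ∑ x, pX x * Wch x y)
            = (1/2) * Real.log (6/5) + (1/2) * Real.log 2 := by
          norm_num [KL, Fin.sum_univ_two, Fin.sum_univ_three, Wch, pX,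
            Matrix.cons_val_zero, Matrix.cons_val_one, Matrix.head_cons, Matrix.cons_val_two, Matrix.tail_cons]
        have hKLx : KL ![0,1] pX = Real.log 2 := by
          norm_num [KL, Fin.sum_univ_two, pX, Matrix.cons_val_zero, Matrix.cons_val_one,
            Matrix.head_cons]
        rw [hKLy, hKLx, SEC.C, show (12/5:ℝ) = (6/5)*2 by norm_num,
          Real.log_mul (by norm_num) (by norm_num)]
        field_simp
    · rintro c ⟨r, ⟨hrpos, hrsum⟩, hrne, rfl⟩
      have hr1 : r 1 = 1 - r 0 := by
        rw [Fin.sum_univ_two] at hrsum; linarith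
      have ha0 : 0 ≤ r 0 := hrpos 0
      have ha1 : r 0 ≤ 1 := by have := hrpos 1; rw [hr1] at this; linarith
      have hane : r 0 ≠ 1/2 := by
        intro h
        apply hrne
        funext x
        fin_cases x
        · show r 0 = pX 0
          rw [h]; norm_num [pX]
        · show r 1 = pX 1
          rw [hr1, h]; norm_num [pX]
      have hf0 : (∑ x, r x * Wch x 0) = 2*(r 0)/3 := by
        rw [Fin.sum_univ_two]; norm_num [Wch]; ring
      have hf1 : (∑ x, r x * Wch x 1) = (3-(r 0))/6 := by
        rw [Fin.sum_univ_two]; norm_num [Wch, hr1]; ring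
      have hf2 : (∑ x, r x * Wch x 2) = (1-(r 0))/2 := by
        rw [Fin.sum_univ_two]; norm_num [Wch, hr1, Matrix.cons_val_two, Matrix.tail_cons, Matrix.head_cons]; ring
      have hg0 : (∑ x, pX x * Wch x 0) = (1:ℝ)/3 := by
        rw [Fin.sum_univ_two]; norm_num [Wch, pX]
      have hg1 : (∑ x, pX x * Wch x 1) = (5:ℝ)/12 := by
        rw [Fin.sum_univ_two]; norm_num [Wch, pX]
      have hg2 : (∑ x, pX x * Wch x 2) = (1:ℝ)/4 := by
        rw [Fin.sum_univ_two]; norm_num [Wch, pX, Matrix.cons_val_two, Matrix.tail_cons, Matrix.head_cons]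
      have hKLy : KL (fun y => ∑ x, r x * Wch x y) (fun y => ∑ x, pX x * Wch x y)
          = (2*(r 0)/3) * Real.log ((2*(r 0)/3)/(1/3))
            + ((3-(r 0))/6) * Real.log (((3-(r 0))/6)/(5/12))
            + ((1-(r 0))/2) * Real.log (((1-(r 0))/2)/(1/4)) := by
        rw [KL, Fin.sum_univ_three]
        simp only [hf0, hf1, hf2, hg0, hg1, hg2]
      have hKLx : KL r pX = (r 0) * Real.log (2*(r 0)) + (1-(r 0)) * Real.log (2-2*(r 0)) := by
        rw [KL, Fin.sum_univ_two, hr1]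
        norm_num [pX]
        rw [show (r 0)/(1/2 : ℝ) = 2*(r 0) by ring, show (1-(r 0))/(1/2 : ℝ) = 2-2*(r 0) by ring]
      rw [hKLy, hKLx, div_le_iff₀ (SEC.KLx_pos ha0 ha1 hane)]
      exact SEC.KL_ratio_le ha0 ha1
  · have hmc : maxCorr pXY = Real.sqrt (3/5) := by
      rw [maxCorr]
      apply IsGreatest.csSup_eq
      set k := Real.sqrt (5/3) with hkdef
      have hk : k ^ 2 = 5/3 := Real.sq_sqrt (by norm_num)
      constructor
      · refine ⟨![1,-1], ![k, -k/5, -k], ?_, ?_, ?_, ?_, ?_⟩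
        · norm_num [pXY, pX, Wch, Fin.sum_univ_two, Fin.sum_univ_three,
            Matrix.cons_val_zero, Matrix.cons_val_one, Matrix.head_cons, Matrix.cons_val_two, Matrix.tail_cons]
        · norm_num [pXY, pX, Wch, Fin.sum_univ_two, Fin.sum_univ_three,
            Matrix.cons_val_zero, Matrix.cons_val_one, Matrix.head_cons, Matrix.cons_val_two, Matrix.tail_cons]
          ring
        · norm_num [pXY, pX, Wch, Fin.sum_univ_two, Fin.sum_univ_three,
            Matrix.cons_val_zero, Matrix.cons_val_one, Matrix.head_cons, Matrix.cons_val_two, Matrix.tail_cons]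
        · norm_num [pXY, pX, Wch, Fin.sum_univ_two, Fin.sum_univ_three,
            Matrix.cons_val_zero, Matrix.cons_val_one, Matrix.head_cons, Matrix.cons_val_two, Matrix.tail_cons]
          linear_combination (3/5) * hk
        · have h2 : (0:ℝ) ≤ 3/5 * k := by rw [hkdef]; positivity
          have h3 : (3/5 * k)^2 = 3/5 := by
            rw [mul_pow, hk]; norm_num
          have key : Real.sqrt (3/5) = 3/5 * k := by
            calc Real.sqrt (3/5) = Real.sqrt ((3/5*k)^2) := by rw [h3]
            _ = 3/5*k := Real.sqrt_sq h2
          rw [key]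
          norm_num [pXY, pX, Wch, Fin.sum_univ_two, Fin.sum_univ_three,
            Matrix.cons_val_zero, Matrix.cons_val_one, Matrix.head_cons, Matrix.cons_val_two, Matrix.tail_cons]
          ring
      · rintro c ⟨f, g, h1, h2, h3, h4, h5⟩
        norm_num [pXY, pX, Wch, Fin.sum_univ_two, Fin.sum_univ_three,
          Matrix.cons_val_zero, Matrix.cons_val_one, Matrix.head_cons, Matrix.cons_val_two, Matrix.tail_cons] at h1 h3 h4 h5
        have hf1 : f 1 = - f 0 := by linarith
        have hsq : f 0 ^ 2 = 1 := by
          rw [hf1] at h3; linarith [h3]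
        have ht : ((1:ℝ)/3 * g 0 - 1/12 * g 1 - 1/4 * g 2)^2 ≤ 3/5 := by
          nlinarith [sq_nonneg (g 0/5 + g 1), sq_nonneg (g 0 + g 2), sq_nonneg (g 1 - g 2/5), h4]
        have habs : |(1:ℝ)/3 * g 0 - 1/12 * g 1 - 1/4 * g 2| ≤ Real.sqrt (3/5) :=
          Real.abs_le_sqrt ht
        have hcases : f 0 = 1 ∨ f 0 = -1 := by
          rcases mul_eq_zero.mp (show (f 0 - 1)*(f 0 + 1) = 0 by linear_combination hsq) with h | h
          · left; linarith
          · right; linarith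
        rcases hcases with h | h
        · have hc : c = (1:ℝ)/3 * g 0 - 1/12 * g 1 - 1/4 * g 2 := by
            rw [hf1, h] at h5; linarith [h5]
          rw [hc]
          exact le_trans (le_abs_self _) habs
        · have hc : c = -((1:ℝ)/3 * g 0 - 1/12 * g 1 - 1/4 * g 2) := by
            rw [hf1, h] at h5; linarith [h5]
          rw [hc]
          exact le_trans (neg_le_abs _) habs
    rw [hmc]
    exact Real.sq_sqrt (by norm_num)
  · rw [hC_eq]
    exact SEC.C_gt
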